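/- arXiv:1907.07657 — 2 statements merged into one kernel-verified Lean document; each statement's English description precedes it below -/
import Mathlib

section
/- With K_m the Nyström operator with kernel κ, if ∂κ/∂u ∈ C^d([0,1]²×ℝ) and v ∈ C^d([0,1]), then ‖K'(φ)v − K_m'(φ)v‖_∞ ≤ C (max_{0≤j≤d} ‖v^{(j)}‖_∞) m^{−d}, where K'(φ) is the Fréchet derivative of the Urysohn operator K at φ, given by (K'(φ)v)(s) = ∫₀¹ ∂κ/∂u(s,t,φ(t)) v(t) dt. -/
open Set

lemma myAux_itd_const {F : Type*} [NormedAddCommGroup F] [NormedSpace ℝ F] :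
    ∀ (n : ℕ) (c : F), iteratedDeriv (n + 1) (fun _ : ℝ => c) = fun _ => 0 := by
  intro n
  induction n with
  | zero => intro c; rw [iteratedDeriv_one]; exact deriv_const' c
  | succ k ih =>
    intro c
    rw [iteratedDeriv_succ', deriv_const' c, ih 0]

lemma myAux_itd_prod {F G : Type*} [NormedAddCommGroup F] [NormedSpace ℝ F]
    [NormedAddCommGroup G] [NormedSpace ℝ G] {f : ℝ → F} {g : ℝ → G} {n : ℕ}
    (hf : ContDiff ℝ (n : ℕ) f) (hg : ContDiff ℝ (n : ℕ) g) :
    ∀ i ≤ n, iteratedDeriv i (fun t => (f t, g t)) =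
      fun t => (iteratedDeriv i f t, iteratedDeriv i g t) := by
  intro i
  induction i with
  | zero => intro _; simp [iteratedDeriv_zero]
  | succ i ih =>
    intro hi
    have hilt : i < n := hi
    funext t
    rw [iteratedDeriv_succ, ih hilt.le]
    have hf' : HasDerivAt (iteratedDeriv i f) (iteratedDeriv (i + 1) f t) t := by
      rw [iteratedDeriv_succ]
      exact ((hf.differentiable_iteratedDeriv i (by exact_mod_cast hilt)) t).hasDerivAt
    have hg' : HasDerivAt (iteratedDeriv i g) (iteratedDeriv (i + 1) g t) t := by
      rw [iteratedDeriv_succ]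
      exact ((hg.differentiable_iteratedDeriv i (by exact_mod_cast hilt)) t).hasDerivAt
    exact (hf'.prodMk hg').deriv

lemma myAux_itd_const' {F : Type*} [NormedAddCommGroup F] [NormedSpace ℝ F]
    {n : ℕ} (hn : 1 ≤ n) (c : F) : iteratedDeriv n (fun _ : ℝ => c) = fun _ => 0 := by
  obtain ⟨k, rfl⟩ := Nat.exists_eq_add_of_le hn
  rw [Nat.add_comm]
  exact myAux_itd_const k c

lemma myAux_itd_id (i : ℕ) (hi : 1 ≤ i) (t : ℝ) :
    ‖iteratedDeriv i (fun x : ℝ => x) t‖ ≤ 1 := by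
  match i, hi with
  | 1, _ => simp [iteratedDeriv_one]
  | (k+2), _ =>
    rw [iteratedDeriv_succ', deriv_id'', myAux_itd_const k 1]
    simp

/-- Error between the Fréchet derivative K'(φ)v (a linear integral operator
with kernel ℓ = ∂κ/∂u) and its Nyström discretization:
‖K'(φ)v − K_m'(φ)v‖_∞ ≤ C (max_{0≤j≤d} ‖v^{(j)}‖_∞) m^{−d}. -/
theorem stmt4 (ρ d : ℕ) (hd : 1 ≤ d) (μ ω : Fin ρ → ℝ)
    (hμ : ∀ i, μ i ∈ Icc (0:ℝ) 1)
    (κ ℓ : ℝ → ℝ → ℝ → ℝ) (φ : ℝ → ℝ) (C₁ : ℝ)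
    (hder : ∀ s t u : ℝ, HasDerivAt (fun w => κ s t w) (ℓ s t u) u)
    (hℓ : ContDiff ℝ d (fun p : ℝ × ℝ × ℝ => ℓ p.1 p.2.1 p.2.2))
    (hφ : ContDiff ℝ d φ)
    (hquad : ∀ m : ℕ, 1 ≤ m → ∀ f : ℝ → ℝ, ContDiff ℝ d f → ∀ M : ℝ,
      (∀ t ∈ Icc (0:ℝ) 1, |iteratedDeriv d f t| ≤ M) →
      |(∫ t in (0:ℝ)..1, f t) -
        (1/(m:ℝ)) * ∑ j ∈ Finset.range m, ∑ i, ω i * f (((j:ℝ) + μ i)/m)|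
        ≤ C₁ * M * ((m:ℝ)^d)⁻¹) :
    ∃ C, ∀ m : ℕ, 1 ≤ m → ∀ v : ℝ → ℝ, ContDiff ℝ d v → ∀ M : ℝ,
      (∀ j ≤ d, ∀ t ∈ Icc (0:ℝ) 1, |iteratedDeriv j v t| ≤ M) →
      ∀ s ∈ Icc (0:ℝ) 1,
      |(∫ t in (0:ℝ)..1, ℓ s t (φ t) * v t) -
        (1/(m:ℝ)) * ∑ j ∈ Finset.range m, ∑ i,
          ω i * ℓ s (((j:ℝ) + μ i)/m) (φ (((j:ℝ) + μ i)/m)) * v (((j:ℝ) + μ i)/m)|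
        ≤ C * M * ((m:ℝ)^d)⁻¹ := by
  set G : ℝ × ℝ × ℝ → ℝ := fun p => ℓ p.1 p.2.1 p.2.2 with hG
  -- compact set containing all points (s, t, φ t)
  set K : Set (ℝ × ℝ × ℝ) := Icc (0:ℝ) 1 ×ˢ (Icc (0:ℝ) 1 ×ˢ (φ '' Icc (0:ℝ) 1)) with hKdef
  have hK : IsCompact K :=
    isCompact_Icc.prod (isCompact_Icc.prod (isCompact_Icc.image hφ.continuous))
  -- bound on derivatives of G on K
  have hFcont : ContinuousOn (fun p => ∑ j ∈ Finset.range (d+1), ‖iteratedFDeriv ℝ j G p‖) K := by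
    refine Continuous.continuousOn ?_
    refine continuous_finset_sum _ fun j hj => ?_
    exact (hℓ.continuous_iteratedFDeriv
      (by exact_mod_cast Finset.mem_range_succ_iff.mp hj)).norm
  obtain ⟨C₂, hC₂⟩ := hK.exists_bound_of_continuousOn hFcont
  have hGb : ∀ j ≤ d, ∀ p ∈ K, ‖iteratedFDeriv ℝ j G p‖ ≤ C₂ := by
    intro j hj p hp
    refine le_trans (Finset.single_le_sum (f := fun j => ‖iteratedFDeriv ℝ j G p‖)
      (fun _ _ => norm_nonneg _) (Finset.mem_range_succ_iff.mpr hj)) ?_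
    have := hC₂ p hp
    rw [Real.norm_eq_abs] at this
    exact le_trans (le_abs_self _) this
  have hC₂0 : 0 ≤ C₂ := by
    have hp0 : ((0:ℝ), (0:ℝ), φ 0) ∈ K := by
      refine ⟨by norm_num, by norm_num, mem_image_of_mem φ (by norm_num)⟩
    exact le_trans (norm_nonneg _) (hGb 0 (Nat.zero_le _) _ hp0)
  -- bound on derivatives of φ on [0,1]
  have hφcont : ContinuousOn (fun t => ∑ j ∈ Finset.range (d+1), ‖iteratedFDeriv ℝ j φ t‖)
      (Icc (0:ℝ) 1) := by
    refine Continuous.continuousOn ?_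
    refine continuous_finset_sum _ fun j hj => ?_
    exact (hφ.continuous_iteratedFDeriv
      (by exact_mod_cast Finset.mem_range_succ_iff.mp hj)).norm
  obtain ⟨Dφ, hDφ⟩ := isCompact_Icc.exists_bound_of_continuousOn hφcont
  have hφb : ∀ j ≤ d, ∀ t ∈ Icc (0:ℝ) 1, ‖iteratedDeriv j φ t‖ ≤ Dφ := by
    intro j hj t ht
    rw [← norm_iteratedFDeriv_eq_norm_iteratedDeriv]
    refine le_trans (Finset.single_le_sum (f := fun j => ‖iteratedFDeriv ℝ j φ t‖)
      (fun _ _ => norm_nonneg _) (Finset.mem_range_succ_iff.mpr hj)) ?_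
    have := hDφ t ht
    rw [Real.norm_eq_abs] at this
    exact le_trans (le_abs_self _) this
  set D : ℝ := max 1 Dφ with hDdef
  have hD1 : (1:ℝ) ≤ D := le_max_left _ _
  -- bound on derivatives of the inner map
  have hinner : ∀ s : ℝ, ContDiff ℝ (d:ℕ) (fun t : ℝ => (s, t, φ t)) :=
    fun s => contDiff_const.prodMk (contDiff_id.prodMk hφ)
  have hDb : ∀ s : ℝ, ∀ t ∈ Icc (0:ℝ) 1, ∀ i, 1 ≤ i → i ≤ d →
      ‖iteratedFDeriv ℝ i (fun t : ℝ => (s, t, φ t)) t‖ ≤ D ^ i := by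
    intro s t ht i hi1 hid
    rw [norm_iteratedFDeriv_eq_norm_iteratedDeriv]
    rw [myAux_itd_prod (f := fun _ : ℝ => s) (g := fun t : ℝ => (t, φ t))
      contDiff_const (contDiff_id.prodMk hφ) i hid]
    rw [myAux_itd_prod (f := fun t : ℝ => t) (g := φ) contDiff_id hφ i hid]
    simp only [myAux_itd_const' hi1]
    have h1 : ‖iteratedDeriv i (fun x : ℝ => x) t‖ ≤ 1 := myAux_itd_id _ hi1 t
    have h2 : ‖iteratedDeriv i φ t‖ ≤ Dφ := hφb _ hid t ht
    have hnorm : ‖((0:ℝ), iteratedDeriv i (fun x : ℝ => x) t, iteratedDeriv i φ t)‖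
        ≤ D := by
      rw [Prod.norm_def, Prod.norm_def]
      simp only [norm_zero]
      refine max_le (by linarith) (max_le (le_trans h1 hD1) (le_trans h2 (le_max_right _ _)))
    exact le_trans hnorm (le_self_pow₀ hD1 (by omega))
  -- bound on derivatives of t ↦ ℓ s t (φ t)
  have hgs : ∀ s ∈ Icc (0:ℝ) 1, ∀ t ∈ Icc (0:ℝ) 1, ∀ i ≤ d,
      ‖iteratedFDeriv ℝ i (fun t => ℓ s t (φ t)) t‖ ≤ (d.factorial : ℝ) * C₂ * D ^ d := by
    intro s hs t ht i hid
    have hcomp : (fun t => ℓ s t (φ t)) = G ∘ (fun t : ℝ => (s, t, φ t)) := rfl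
    rw [hcomp]
    have key : ‖iteratedFDeriv ℝ i (G ∘ fun t : ℝ => (s, t, φ t)) t‖ ≤ (i.factorial : ℝ) * C₂ * D ^ i := by
      refine norm_iteratedFDeriv_comp_le hℓ (hinner s) (by exact_mod_cast hid) t
        (fun j hj => hGb j (le_trans hj hid) _ ⟨hs, ht, mem_image_of_mem φ ht⟩)
        (fun j hj1 hjd => hDb s t ht j hj1 (le_trans hjd hid))
    refine le_trans key ?_
    have hfac : (i.factorial : ℝ) ≤ (d.factorial : ℝ) := by
      exact_mod_cast Nat.factorial_le hid
    have hD0 : (0:ℝ) ≤ D := by linarith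
    exact mul_le_mul (mul_le_mul hfac le_rfl hC₂0 (by positivity))
      (pow_le_pow_right₀ hD1 hid) (pow_nonneg hD0 i) (mul_nonneg (by positivity) hC₂0)
  set B : ℝ := (d.factorial : ℝ) * C₂ * D ^ d with hBdef
  have hB0 : 0 ≤ B := by
    have : (0:ℝ) ≤ (d.factorial : ℝ) := by positivity
    have hD0 : (0:ℝ) ≤ D ^ d := by positivity
    exact mul_nonneg (mul_nonneg this hC₂0) hD0
  refine ⟨C₁ * (2^d * B), ?_⟩
  intro m hm v hv M hM s hs
  have hM0 : 0 ≤ M := le_trans (abs_nonneg _) (hM 0 (Nat.zero_le d) 0 (by norm_num))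
  have hgC : ContDiff ℝ d (fun t => ℓ s t (φ t)) := hℓ.comp (hinner s)
  have hfC : ContDiff ℝ d (fun t => ℓ s t (φ t) * v t) := hgC.mul hv
  have hderb : ∀ t ∈ Icc (0:ℝ) 1,
      |iteratedDeriv d (fun t => ℓ s t (φ t) * v t) t| ≤ 2^d * B * M := by
    intro t ht
    rw [← Real.norm_eq_abs, ← norm_iteratedFDeriv_eq_norm_iteratedDeriv]
    calc ‖iteratedFDeriv ℝ d (fun t => ℓ s t (φ t) * v t) t‖
        ≤ ∑ i ∈ Finset.range (d+1), (d.choose i : ℝ) *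
            ‖iteratedFDeriv ℝ i (fun t => ℓ s t (φ t)) t‖ *
            ‖iteratedFDeriv ℝ (d-i) v t‖ :=
          norm_iteratedFDeriv_mul_le hgC hv t le_rfl
      _ ≤ ∑ i ∈ Finset.range (d+1), (d.choose i : ℝ) * B * M := by
          refine Finset.sum_le_sum fun i hi => ?_
          have h1 : ‖iteratedFDeriv ℝ i (fun t => ℓ s t (φ t)) t‖ ≤ B :=
            hgs s hs t ht i (Finset.mem_range_succ_iff.mp hi)
          have h2 : ‖iteratedFDeriv ℝ (d-i) v t‖ ≤ M := by
            rw [norm_iteratedFDeriv_eq_norm_iteratedDeriv, Real.norm_eq_abs]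
            exact hM (d-i) (Nat.sub_le d i) t ht
          have hB0' : (0:ℝ) ≤ (d.choose i : ℝ) * B :=
            mul_nonneg (by positivity) hB0
          exact mul_le_mul (mul_le_mul le_rfl h1 (norm_nonneg _) (by positivity)) h2
            (norm_nonneg _) hB0'
      _ = 2^d * B * M := by
          rw [← Finset.sum_mul, ← Finset.sum_mul, ← Nat.cast_sum, Nat.sum_range_choose]
          push_cast
          ring
  have h := hquad m hm _ hfC (2^d * B * M) hderb
  calc |(∫ t in (0:ℝ)..1, ℓ s t (φ t) * v t) -
        (1/(m:ℝ)) * ∑ j ∈ Finset.range m, ∑ i,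
          ω i * ℓ s (((j:ℝ) + μ i)/m) (φ (((j:ℝ) + μ i)/m)) * v (((j:ℝ) + μ i)/m)|
      = |(∫ t in (0:ℝ)..1, ℓ s t (φ t) * v t) -
        (1/(m:ℝ)) * ∑ j ∈ Finset.range m, ∑ i,
          ω i * (ℓ s (((j:ℝ) + μ i)/m) (φ (((j:ℝ) + μ i)/m)) * v (((j:ℝ) + μ i)/m))| := by
        simp only [mul_assoc]
    _ ≤ C₁ * (2^d * B * M) * ((m:ℝ)^d)⁻¹ := h
    _ = C₁ * (2^d * B) * M * ((m:ℝ)^d)⁻¹ := by ring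
end

section
/- Suppose z̃_n − φ_m = α n^{−4r} + ρ_n with ‖ρ_n‖_∞ ≤ C n^{−2r} max{m̃^{−d}, n^{−(2r+2)}}, where α ∈ C[0,1] is independent of n. Define the Richardson extrapolant z_n^E = (2^{4r} z̃_{2n} − z̃_n)/(2^{4r} − 1). Then ‖z_n^E − φ_m‖_∞ ≤ C' n^{−2r} max{m̃^{−d}, n^{−(2r+2)}}; in particular, if m̃^{−d} ≤ n^{−(2r+2)}, then ‖z_n^E − φ_m‖_∞ = O(n^{−(4r+2)}). -/
/-- Richardson extrapolation: if z̃_n − φ_m = n^{−4r} α + ρ_n with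
‖ρ_n‖ ≤ C n^{−2r} max{m̃^{−d}, n^{−(2r+2)}}, then the extrapolant
z_n^E = (2^{4r} z̃_{2n} − z̃_n)/(2^{4r} − 1) satisfies
‖z_n^E − φ_m‖ ≤ C' n^{−2r} max{m̃^{−d}, n^{−(2r+2)}}; in particular, if
m̃^{−d} ≤ n^{−(2r+2)}, then ‖z_n^E − φ_m‖ = O(n^{−(4r+2)}). -/
theorem stmt19 {X : Type*} [NormedAddCommGroup X] [NormedSpace ℝ X]
    (r : ℕ) (hr : 1 ≤ r) (zt : ℕ → X) (φm α : X) (ρ : ℕ → X) (em C : ℝ)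
    (hem : 0 ≤ em) (hC : 0 ≤ C)
    (hexp : ∀ n : ℕ, 1 ≤ n → zt n - φm = ((n:ℝ)^(4*r))⁻¹ • α + ρ n)
    (hρ : ∀ n : ℕ, 1 ≤ n →
      ‖ρ n‖ ≤ C * ((n:ℝ)^(2*r))⁻¹ * max em (((n:ℝ)^(2*r+2))⁻¹)) :
    ∃ C', (∀ n : ℕ, 1 ≤ n →
      ‖(((2:ℝ)^(4*r) - 1)⁻¹) • (((2:ℝ)^(4*r)) • zt (2*n) - zt n) - φm‖
        ≤ C' * ((n:ℝ)^(2*r))⁻¹ * max em (((n:ℝ)^(2*r+2))⁻¹))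
    ∧ (∀ n : ℕ, 1 ≤ n → em ≤ ((n:ℝ)^(2*r+2))⁻¹ →
      ‖(((2:ℝ)^(4*r) - 1)⁻¹) • (((2:ℝ)^(4*r)) • zt (2*n) - zt n) - φm‖
        ≤ C' * ((n:ℝ)^(4*r+2))⁻¹) := by
  have h16 : (16:ℝ) ≤ (2:ℝ)^(4*r) := by
    calc (16:ℝ) = 2^4 := by norm_num
    _ ≤ 2^(4*r) := pow_le_pow_right₀ (by norm_num) (by omega)
  have hD0 : (0:ℝ) < (2:ℝ)^(4*r) - 1 := by linarith
  set C' : ℝ := ((2:ℝ)^(4*r) - 1)⁻¹ * ((2:ℝ)^(4*r) + 1) * C with hC'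
  have main : ∀ n : ℕ, 1 ≤ n →
      ‖(((2:ℝ)^(4*r) - 1)⁻¹) • (((2:ℝ)^(4*r)) • zt (2*n) - zt n) - φm‖
        ≤ C' * ((n:ℝ)^(2*r))⁻¹ * max em (((n:ℝ)^(2*r+2))⁻¹) := by
    intro n hn
    have hn0 : (0:ℝ) < (n:ℝ) := by exact_mod_cast hn
    have hn0' : (n:ℝ) ≠ 0 := ne_of_gt hn0
    have hDne : ((2:ℝ)^(4*r) - 1) ≠ 0 := ne_of_gt hD0
    have h1 := hexp n hn
    have h2 := hexp (2*n) (by omega)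
    have hz1 : zt n = ((n:ℝ)^(4*r))⁻¹ • α + ρ n + φm := by
      rw [← h1]; abel
    have hz2 : zt (2*n) = (((2*n:ℕ):ℝ)^(4*r))⁻¹ • α + ρ (2*n) + φm := by
      rw [← h2]; abel
    have key : (((2:ℝ)^(4*r) - 1)⁻¹) • (((2:ℝ)^(4*r)) • zt (2*n) - zt n) - φm
        = (((2:ℝ)^(4*r) - 1)⁻¹) • (((2:ℝ)^(4*r)) • ρ (2*n) - ρ n) := by
      rw [hz1, hz2]
      have hcast : ((2*n:ℕ):ℝ) = 2 * (n:ℝ) := by push_cast; ring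
      rw [hcast]
      match_scalars
      · field_simp
        ring
      · field_simp
      · field_simp
        norm_num
      · field_simp
    rw [key, norm_smul]
    have habs : ‖((2:ℝ)^(4*r) - 1)⁻¹‖ = ((2:ℝ)^(4*r) - 1)⁻¹ := by
      rw [Real.norm_eq_abs, abs_of_pos (inv_pos.mpr hD0)]
    rw [habs]
    set B : ℝ := C * ((n:ℝ)^(2*r))⁻¹ * max em (((n:ℝ)^(2*r+2))⁻¹) with hB
    have hBnn : 0 ≤ B := by
      apply mul_nonneg (mul_nonneg hC (by positivity))
      exact le_max_of_le_right (by positivity)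
    have hρn : ‖ρ n‖ ≤ B := hρ n hn
    have hρ2n : ‖ρ (2*n)‖ ≤ B := by
      refine le_trans (hρ (2*n) (by omega)) ?_
      have hcast : ((2*n:ℕ):ℝ) = 2 * (n:ℝ) := by push_cast; ring
      rw [hcast, hB]
      have h12 : (n:ℝ) ≤ 2 * n := by linarith
      gcongr
    have hnorm : ‖((2:ℝ)^(4*r)) • ρ (2*n) - ρ n‖ ≤ (2:ℝ)^(4*r) * B + B := by
      refine le_trans (norm_sub_le _ _) ?_
      rw [norm_smul, Real.norm_eq_abs, abs_of_pos (by positivity : (0:ℝ) < (2:ℝ)^(4*r))]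
      have : (0:ℝ) ≤ (2:ℝ)^(4*r) := by positivity
      gcongr
    calc ((2:ℝ)^(4*r) - 1)⁻¹ * ‖((2:ℝ)^(4*r)) • ρ (2*n) - ρ n‖
        ≤ ((2:ℝ)^(4*r) - 1)⁻¹ * ((2:ℝ)^(4*r) * B + B) := by
          gcongr
      _ = C' * ((n:ℝ)^(2*r))⁻¹ * max em (((n:ℝ)^(2*r+2))⁻¹) := by
          rw [hC', hB]; ring
  refine ⟨C', main, ?_⟩
  intro n hn hem2
  have hC'nn : 0 ≤ C' := by
    apply mul_nonneg (mul_nonneg (le_of_lt (inv_pos.mpr hD0)) (by positivity)) hC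
  have := main n hn
  rw [max_eq_right hem2] at this
  refine le_trans this (le_of_eq ?_)
  rw [mul_assoc, mul_assoc, ← mul_inv, ← pow_add]
  have he : 2*r + (2*r+2) = 4*r+2 := by omega
  rw [he, hC']
  ring
end
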